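/- Let z : [-1,1] → ℝ be twice continuously differentiable and satisfy L[z](x) ≥ 0 for all x ∈ [-1,1]. If z(x₀) = 0 for some x₀ in the open interval (-1,1), then z vanishes identically on [-1,1]. (Strong maximum principle for the linearized generalized-apparent-horizon operator; note the zeroth-order coefficient of L is +1, so this is the version of the maximum principle valid because the interior minimum value is zero.) -/

import Mathlib

open Set Filter Topology

/-- The linearized generalized-apparent-horizon operator
`L[z](x) = -(1 - x²) z''(x) + 2x z'(x) + z(x)`, written in terms of
given derivative functions `z'`, `z''`. -/
noncomputable def Lop (z z' z'' : ℝ → ℝ) (x : ℝ) : ℝ :=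
  -(1 - x ^ 2) * z'' x + 2 * x * z' x + z x

lemma min_interior {f f' f'' : ℝ → ℝ} {a b x : ℝ} (hx : x ∈ Ioo a b)
    (hf : ∀ y ∈ Icc a b, HasDerivWithinAt f (f' y) (Icc a b) y)
    (hf' : ∀ y ∈ Icc a b, HasDerivWithinAt f' (f'' y) (Icc a b) y)
    (hmin : IsMinOn f (Icc a b) x) : f' x = 0 ∧ 0 ≤ f'' x := by
  have hxm : x ∈ Icc a b := Ioo_subset_Icc_self hx
  have hnhds : Icc a b ∈ 𝓝 x := Icc_mem_nhds hx.1 hx.2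
  have hfx : HasDerivAt f (f' x) x := (hf x hxm).hasDerivAt hnhds
  have hf'x : HasDerivAt f' (f'' x) x := (hf' x hxm).hasDerivAt hnhds
  have hd0 : f' x = 0 := (hmin.isLocalMin hnhds).hasDerivAt_eq_zero hfx
  refine ⟨hd0, ?_⟩
  by_contra hneg
  push_neg at hneg
  -- slope of f' tends to f'' x < 0, so f' < 0 just to the right of x
  have hslope : Tendsto (slope f' x) (𝓝[≠] x) (𝓝 (f'' x)) :=
    hasDerivAt_iff_tendsto_slope.1 hf'x
  have hE : ∀ᶠ y in 𝓝[>] x, slope f' x y < 0 :=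
    (hslope.mono_left (nhdsWithin_mono x fun y hy => ne_of_gt hy)).eventually_lt_const hneg
  rw [eventually_nhdsWithin_iff] at hE
  obtain ⟨U, hUsub, hUo, hxU⟩ := eventually_nhds_iff.1 hE
  obtain ⟨l, u, hlu, hluU⟩ := (mem_nhds_iff_exists_Ioo_subset).1 (hUo.mem_nhds hxU)
  have hxu : x < u := hlu.2
  set d := min u b
  have hxd : x < d := lt_min hxu hx.2
  set m := (x + d) / 2 with hm
  have hxm2 : x < m := by simp [hm]; linarith
  have hmd : m < d := by simp [hm]; linarith
  -- f' is negative on Ioo x m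
  have hneg' : ∀ y ∈ Ioo x m, f' y < 0 := by
    intro y hy
    have hyu : y ∈ Ioo l u := ⟨lt_trans hlu.1 hy.1, lt_of_lt_of_le (hy.2.trans hmd) (min_le_left _ _)⟩
    have hs := hUsub y (hluU hyu) hy.1
    have : slope f' x y = f' y / (y - x) := by
      rw [slope_def_field, hd0]; ring
    rw [this] at hs
    have hyx : 0 < y - x := sub_pos.2 hy.1
    rcases div_neg_iff.1 hs with h | h
    · linarith [h.2]
    · exact h.1
  -- f is strictly decreasing on Icc x m, contradiction with min at x
  have hsub : Icc x m ⊆ Icc a b := Icc_subset_Icc (le_of_lt hx.1) (by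
    have : d ≤ b := min_le_right _ _
    linarith)
  have hcont : ContinuousOn f (Icc x m) :=
    fun y hy => ((hf y (hsub hy)).continuousWithinAt).mono hsub
  have hanti : StrictAntiOn f (Icc x m) := by
    apply strictAntiOn_of_deriv_neg (convex_Icc x m) hcont
    intro y hy
    rw [interior_Icc] at hy
    have hy' : y ∈ Icc a b := hsub (Ioo_subset_Icc_self hy)
    have : HasDerivAt f (f' y) y :=
      (hf y hy').hasDerivAt (Icc_mem_nhds (lt_of_lt_of_le hx.1 (le_of_lt hy.1))
        (lt_of_lt_of_le (hy.2.trans hmd) (min_le_right _ _)))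
    rw [this.deriv]
    exact hneg' y hy
  have : f m < f x := hanti (left_mem_Icc.2 (le_of_lt hxm2)) (right_mem_Icc.2 (le_of_lt hxm2)) hxm2
  exact absurd (hmin (hsub (right_mem_Icc.2 (le_of_lt hxm2)))) (not_le.2 this)

lemma weak_min (z z' z'' : ℝ → ℝ)
    (hz : ∀ x ∈ Icc (-1 : ℝ) 1, HasDerivWithinAt z (z' x) (Icc (-1 : ℝ) 1) x)
    (hz' : ∀ x ∈ Icc (-1 : ℝ) 1, HasDerivWithinAt z' (z'' x) (Icc (-1 : ℝ) 1) x)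
    (hL : ∀ x ∈ Icc (-1 : ℝ) 1, 0 ≤ Lop z z' z'' x) :
    ∀ x ∈ Icc (-1 : ℝ) 1, 0 ≤ z x := by
  have hcont : ContinuousOn z (Icc (-1 : ℝ) 1) := fun y hy => (hz y hy).continuousWithinAt
  obtain ⟨w, hw, hwmin⟩ := isCompact_Icc.exists_isMinOn (nonempty_Icc.2 (by norm_num)) hcont
  intro x hx
  suffices h : 0 ≤ z w from le_trans h (hwmin hx)
  rcases eq_or_lt_of_le hw.1 with h1 | h1
  · -- w = -1
    have hy : (1 : ℝ) ∈ posTangentConeAt (Icc (-1 : ℝ) 1) (-1) := by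
      apply mem_posTangentConeAt_of_segment_subset
      rw [show (-1 : ℝ) + 1 = 0 by norm_num, segment_eq_Icc (by norm_num : (-1:ℝ) ≤ 0)]
      exact Icc_subset_Icc le_rfl (by norm_num)
    rw [← h1] at hwmin ⊢
    have hd : 0 ≤ z' (-1) := by
      have := hwmin.localize.hasFDerivWithinAt_nonneg
        ((hz (-1) (by norm_num)).hasFDerivWithinAt) hy
      simpa using this
    have := hL (-1) (by norm_num)
    simp only [Lop] at this
    nlinarith
  · rcases eq_or_lt_of_le hw.2 with h2 | h2
    · -- w = 1
      have hy : (-1 : ℝ) ∈ posTangentConeAt (Icc (-1 : ℝ) 1) 1 := by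
        apply mem_posTangentConeAt_of_segment_subset
        rw [show (1 : ℝ) + -1 = 0 by norm_num, segment_eq_Icc' ]
        simp only [min_eq_right (by norm_num : (0:ℝ) ≤ 1), max_eq_left (by norm_num : (0:ℝ) ≤ 1)]
        exact Icc_subset_Icc (by norm_num) le_rfl
      rw [h2] at hwmin ⊢
      have hd : z' 1 ≤ 0 := by
        have := hwmin.localize.hasFDerivWithinAt_nonneg
          ((hz 1 (by norm_num)).hasFDerivWithinAt) hy
        simp at this
        linarith
      have := hL 1 (by norm_num)
      simp only [Lop] at this
      nlinarith
    · -- interior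
      obtain ⟨hd0, hd2⟩ := min_interior (a := -1) (b := 1) ⟨h1, h2⟩ hz hz' hwmin
      have := hL w hw
      simp only [Lop, hd0] at this
      nlinarith [sq_nonneg w, mul_nonneg (by nlinarith [hw.1, hw.2] : (0:ℝ) ≤ 1 - w^2) hd2]

set_option maxHeartbeats 1000000 in
lemma hopf_right (z z' z'' : ℝ → ℝ)
    (hz : ∀ x ∈ Icc (-1 : ℝ) 1, HasDerivWithinAt z (z' x) (Icc (-1 : ℝ) 1) x)
    (hz' : ∀ x ∈ Icc (-1 : ℝ) 1, HasDerivWithinAt z' (z'' x) (Icc (-1 : ℝ) 1) x)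
    (hL : ∀ x ∈ Icc (-1 : ℝ) 1, 0 ≤ Lop z z' z'' x)
    (hpos : ∀ x ∈ Icc (-1 : ℝ) 1, 0 ≤ z x)
    (x₀ : ℝ) (hx₀ : x₀ ∈ Ioo (-1 : ℝ) 1) (hz₀ : z x₀ = 0)
    (b : ℝ) (hb : b ∈ Ioo x₀ 1) : z b ≤ 0 := by
  by_contra hzb
  push_neg at hzb
  have hx₀m : x₀ ∈ Icc (-1 : ℝ) 1 := Ioo_subset_Icc_self hx₀
  have hsub : Icc x₀ b ⊆ Icc (-1 : ℝ) 1 := Icc_subset_Icc hx₀.1.le hb.2.le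
  -- x₀ is an interior minimum of z, so z' x₀ = 0
  have hmin : IsMinOn z (Icc (-1 : ℝ) 1) x₀ := by
    intro y hy; simpa [hz₀] using hpos y hy
  obtain ⟨hd0, -⟩ := min_interior (a := -1) (b := 1) hx₀ hz hz' hmin
  -- the ellipticity constant c
  set c : ℝ := min (1 - x₀ ^ 2) (1 - b ^ 2) with hc_def
  have hc : 0 < c := by
    apply lt_min <;> nlinarith [hx₀.1, hx₀.2, hb.1, hb.2]
  have hcx : ∀ x ∈ Icc x₀ b, c ≤ 1 - x ^ 2 := by
    intro x hx
    rcases le_total x 0 with h | h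
    · have : x ^ 2 ≤ x₀ ^ 2 := by nlinarith [hx.1]
      calc c ≤ 1 - x₀ ^ 2 := min_le_left _ _
        _ ≤ 1 - x ^ 2 := by linarith
    · have : x ^ 2 ≤ b ^ 2 := by nlinarith [hx.2]
      calc c ≤ 1 - b ^ 2 := min_le_right _ _
        _ ≤ 1 - x ^ 2 := by linarith
  -- the exponent α
  set α : ℝ := 3 / c + 3 with hα_def
  have hα3 : 3 ≤ α := by
    have h0 : 0 < 3 / c := by positivity
    rw [hα_def]; linarith
  have hcα : c * α = 3 + 3 * c := by
    rw [hα_def]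
    field_simp
  have hbracket : ∀ x ∈ Icc x₀ b, -(1 - x ^ 2) * α ^ 2 + 2 * x * α + 1 < 0 := by
    intro x hx
    have h1 : c ≤ 1 - x ^ 2 := hcx x hx
    have h2 : x ≤ 1 := hx.2.trans hb.2.le
    nlinarith [hcα, hα3, mul_le_mul_of_nonneg_right h1 (by positivity : (0:ℝ) ≤ α ^ 2)]
  -- the barrier
  set E : ℝ → ℝ := fun x => Real.exp (α * (x - x₀)) with hE_def
  have hE : ∀ x : ℝ, HasDerivAt E (α * E x) x := by
    intro x
    have h1 : HasDerivAt (fun x : ℝ => α * (x - x₀)) α x := by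
      simpa using (((hasDerivAt_id x).sub_const x₀).const_mul α)
    simpa [hE_def, mul_comm] using h1.exp
  have hE0 : ∀ x : ℝ, 0 < E x := fun x => Real.exp_pos _
  have hEx₀ : E x₀ = 1 := by simp [hE_def]
  have hEb : 1 < E b := by
    rw [hE_def]
    apply Real.one_lt_exp_iff.2
    have h1 : 0 < α := by linarith
    have h2 : 0 < b - x₀ := by linarith [hb.1]
    positivity
  set ε : ℝ := z b / (2 * (E b - 1)) with hε_def
  have hε : 0 < ε := by
    apply div_pos hzb
    linarith
  set v : ℝ → ℝ := fun x => z x - ε * (E x - 1) with hv_def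
  set vd : ℝ → ℝ := fun x => z' x - ε * (α * E x) with hvd_def
  set vdd : ℝ → ℝ := fun x => z'' x - ε * (α * (α * E x)) with hvdd_def
  have hv : ∀ x ∈ Icc x₀ b, HasDerivWithinAt v (vd x) (Icc x₀ b) x := by
    intro x hx
    exact ((hz x (hsub hx)).mono hsub).sub
      ((((hE x).hasDerivWithinAt).sub_const 1).const_mul ε)
  have hvd : ∀ x ∈ Icc x₀ b, HasDerivWithinAt vd (vdd x) (Icc x₀ b) x := by
    intro x hx
    exact ((hz' x (hsub hx)).mono hsub).sub
      ((((hE x).const_mul α).hasDerivWithinAt).const_mul ε)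
  have hvcont : ContinuousOn v (Icc x₀ b) := fun y hy => (hv y hy).continuousWithinAt
  -- minimum of v on [x₀, b]
  obtain ⟨w, hw, hwmin⟩ := isCompact_Icc.exists_isMinOn (nonempty_Icc.2 hb.1.le) hvcont
  have hvx₀ : v x₀ = 0 := by simp [hv_def, hz₀, hEx₀]
  have hvb : 0 < v b := by
    have hne1 : E b - 1 ≠ 0 := ne_of_gt (by linarith)
    have : ε * (E b - 1) = z b / 2 := by
      rw [hε_def]; field_simp
    simp only [hv_def, this]
    linarith
  -- v is negative somewhere just right of x₀
  have hvdx₀ : vd x₀ < 0 := by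
    simp only [hvd_def, hd0, hEx₀]
    nlinarith
  have hexy : ∃ y ∈ Icc x₀ b, v y < 0 := by
    have hder := hv x₀ (left_mem_Icc.2 hb.1.le)
    have hslope : Filter.Tendsto (slope v x₀) (𝓝[Icc x₀ b \ {x₀}] x₀) (𝓝 (vd x₀)) :=
      hasDerivWithinAt_iff_tendsto_slope.1 hder
    have hmono : 𝓝[Ioc x₀ b] x₀ ≤ 𝓝[Icc x₀ b \ {x₀}] x₀ := by
      apply nhdsWithin_mono
      intro y hy
      exact ⟨Ioc_subset_Icc_self hy, ne_of_gt hy.1⟩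
    have hne : (𝓝[Ioc x₀ b] x₀).NeBot := by
      rw [nhdsWithin_Ioc_eq_nhdsGT hb.1]
      infer_instance
    have hev : ∀ᶠ y in 𝓝[Ioc x₀ b] x₀, slope v x₀ y < 0 :=
      (hslope.mono_left hmono).eventually_lt_const hvdx₀
    have hev2 : ∀ᶠ y in 𝓝[Ioc x₀ b] x₀, y ∈ Ioc x₀ b :=
      eventually_mem_nhdsWithin
    obtain ⟨y, hy1, hy2⟩ := (hev.and hev2).exists
    refine ⟨y, Ioc_subset_Icc_self hy2, ?_⟩
    rw [slope_def_field, hvx₀, sub_zero] at hy1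
    have hyx : 0 < y - x₀ := sub_pos.2 hy2.1
    rcases div_neg_iff.1 hy1 with h | h
    · linarith [h.2]
    · exact h.1
  obtain ⟨y, hy, hvy⟩ := hexy
  have hvw : v w < 0 := lt_of_le_of_lt (hwmin hy) hvy
  have hwx₀ : w ≠ x₀ := by intro h; rw [h, hvx₀] at hvw; exact lt_irrefl _ hvw
  have hwb : w ≠ b := by intro h; rw [h] at hvw; linarith
  have hwint : w ∈ Ioo x₀ b := ⟨lt_of_le_of_ne hw.1 (Ne.symm hwx₀), lt_of_le_of_ne hw.2 hwb⟩
  obtain ⟨hvd0, hvdd0⟩ := min_interior hwint hv hvd hwmin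
  -- now derive the contradiction from L[z](w) ≥ 0
  have hLw := hL w (hsub hw)
  simp only [Lop] at hLw
  have hzw : z w = v w + ε * (E w - 1) := by simp [hv_def]
  have hz'w : z' w = ε * (α * E w) := by
    have : vd w = z' w - ε * (α * E w) := rfl
    rw [this] at hvd0; linarith
  have hz''w : ε * (α * (α * E w)) ≤ z'' w := by
    have : vdd w = z'' w - ε * (α * (α * E w)) := rfl
    rw [this] at hvdd0; linarith
  have hbw := hbracket w hw
  have hcw := hcx w hw
  have hEw := hE0 w
  -- -(1-w²) z''(w) ≤ -(1-w²) ε α² E w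
  have h1 : -(1 - w ^ 2) * z'' w ≤ -(1 - w ^ 2) * (ε * (α * (α * E w))) := by
    apply mul_le_mul_of_nonpos_left hz''w
    nlinarith
  have h2 : -(1 - w ^ 2) * (ε * (α * (α * E w))) + 2 * w * (ε * (α * E w)) + ε * (E w - 1)
      = ε * (E w * (-(1 - w ^ 2) * α ^ 2 + 2 * w * α + 1) - 1) := by ring
  have h3 : E w * (-(1 - w ^ 2) * α ^ 2 + 2 * w * α + 1) < 0 :=
    mul_neg_of_pos_of_neg hEw hbw
  have h4 : ε * (E w * (-(1 - w ^ 2) * α ^ 2 + 2 * w * α + 1) - 1) < 0 :=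
    mul_neg_of_pos_of_neg hε (by linarith)
  rw [hzw, hz'w] at hLw
  linarith [h1, h2, h4, hLw]

/-- `z` is twice continuously differentiable on `[-1,1]`, with first derivative `z'`
and second derivative `z''`. -/
def IsC2On (z z' z'' : ℝ → ℝ) : Prop :=
  (∀ x ∈ Icc (-1 : ℝ) 1, HasDerivWithinAt z (z' x) (Icc (-1 : ℝ) 1) x) ∧
  (∀ x ∈ Icc (-1 : ℝ) 1, HasDerivWithinAt z' (z'' x) (Icc (-1 : ℝ) 1) x) ∧
  ContinuousOn z'' (Icc (-1 : ℝ) 1)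

/-- Strong maximum principle for the operator `L`: if `L[z] ≥ 0` on `[-1,1]`
and `z` vanishes at an interior point `x₀ ∈ (-1,1)`, then `z ≡ 0` on `[-1,1]`. -/
theorem strong_maximum_principle_Lop (z z' z'' : ℝ → ℝ)
    (hC2 : IsC2On z z' z'')
    (hL : ∀ x ∈ Icc (-1 : ℝ) 1, 0 ≤ Lop z z' z'' x)
    (x₀ : ℝ) (hx₀ : x₀ ∈ Ioo (-1 : ℝ) 1) (hz₀ : z x₀ = 0) :
    ∀ x ∈ Icc (-1 : ℝ) 1, z x = 0 := by
  obtain ⟨hz, hz', hz''⟩ := hC2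
  have hpos : ∀ x ∈ Icc (-1 : ℝ) 1, 0 ≤ z x := weak_min z z' z'' hz hz' hL
  -- the reflected functions
  set Z : ℝ → ℝ := fun x => z (-x) with hZ_def
  set Z' : ℝ → ℝ := fun x => -z' (-x) with hZ'_def
  set Z'' : ℝ → ℝ := fun x => z'' (-x) with hZ''_def
  have hmaps : ∀ x ∈ Icc (-1 : ℝ) 1, -x ∈ Icc (-1 : ℝ) 1 := by
    intro x hx; constructor <;> [linarith [hx.2]; linarith [hx.1]]
  have hneg : ∀ x : ℝ, HasDerivWithinAt (fun y : ℝ => -y) (-1 : ℝ)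
      (Icc (-1 : ℝ) 1) x := fun x => (hasDerivAt_neg x).hasDerivWithinAt
  have hZd : ∀ x ∈ Icc (-1 : ℝ) 1, HasDerivWithinAt Z (Z' x) (Icc (-1 : ℝ) 1) x := by
    intro x hx
    have := HasDerivWithinAt.scomp x (hz (-x) (hmaps x hx)) (hneg x)
      (fun y hy => hmaps y hy)
    simpa [hZ_def, hZ'_def, Function.comp_def, mul_comm] using this
  have hZd' : ∀ x ∈ Icc (-1 : ℝ) 1, HasDerivWithinAt Z' (Z'' x) (Icc (-1 : ℝ) 1) x := by
    intro x hx
    have := (HasDerivWithinAt.scomp x (hz' (-x) (hmaps x hx)) (hneg x)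
      (fun y hy => hmaps y hy)).neg
    simpa [hZ'_def, hZ''_def, Function.comp_def, Pi.neg_def, mul_comm] using this
  have hZL : ∀ x ∈ Icc (-1 : ℝ) 1, 0 ≤ Lop Z Z' Z'' x := by
    intro x hx
    have := hL (-x) (hmaps x hx)
    simp only [Lop, hZ_def, hZ'_def, hZ''_def] at *
    nlinarith [this]
  have hZpos : ∀ x ∈ Icc (-1 : ℝ) 1, 0 ≤ Z x := fun x hx => hpos (-x) (hmaps x hx)
  have hZx₀ : -x₀ ∈ Ioo (-1 : ℝ) 1 := ⟨by linarith [hx₀.2], by linarith [hx₀.1]⟩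
  have hZz₀ : Z (-x₀) = 0 := by simpa [hZ_def] using hz₀
  -- z = 0 on the open interval
  have hIoo : ∀ x ∈ Ioo (-1 : ℝ) 1, z x = 0 := by
    intro x hx
    rcases lt_trichotomy x x₀ with h | h | h
    · have hb : -x ∈ Ioo (-x₀) 1 := ⟨by linarith, by linarith [hx.1]⟩
      have := hopf_right Z Z' Z'' hZd hZd' hZL hZpos (-x₀) hZx₀ hZz₀ (-x) hb
      have h2 : Z (-x) = z x := by simp [hZ_def]
      rw [h2] at this
      exact le_antisymm this (hpos x (Ioo_subset_Icc_self hx))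
    · rw [h]; exact hz₀
    · have := hopf_right z z' z'' hz hz' hL hpos x₀ hx₀ hz₀ x ⟨h, hx.2⟩
      exact le_antisymm this (hpos x (Ioo_subset_Icc_self hx))
  -- endpoints by continuity
  have hcont : ContinuousOn z (Icc (-1 : ℝ) 1) := fun y hy => (hz y hy).continuousWithinAt
  have hend : ∀ e : ℝ, e ∈ Icc (-1 : ℝ) 1 → z e = 0 := by
    intro e he
    rcases eq_or_lt_of_le he.1 with h1 | h1
    · -- e = -1
      have hne : (𝓝[Ioo (-1 : ℝ) 1] (-1 : ℝ)).NeBot :=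
        mem_closure_iff_nhdsWithin_neBot.1 (by
          rw [closure_Ioo (by norm_num : (-1 : ℝ) ≠ 1)]
          exact ⟨le_refl _, by norm_num⟩)
      have h2 : Filter.Tendsto z (𝓝[Ioo (-1 : ℝ) 1] (-1)) (𝓝 (z (-1))) :=
        ((hcont (-1) (by norm_num)).mono Ioo_subset_Icc_self).tendsto
      have h3 : Filter.Tendsto z (𝓝[Ioo (-1 : ℝ) 1] (-1)) (𝓝 0) := by
        apply Filter.Tendsto.congr' _ tendsto_const_nhds
        filter_upwards [eventually_mem_nhdsWithin] with y hy
        exact (hIoo y hy).symm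
      rw [← h1]
      exact tendsto_nhds_unique h2 h3
    rcases eq_or_lt_of_le he.2 with h2 | h2
    · -- e = 1
      have hne : (𝓝[Ioo (-1 : ℝ) 1] (1 : ℝ)).NeBot :=
        mem_closure_iff_nhdsWithin_neBot.1 (by
          rw [closure_Ioo (by norm_num : (-1 : ℝ) ≠ 1)]
          exact ⟨by norm_num, le_refl _⟩)
      have h2' : Filter.Tendsto z (𝓝[Ioo (-1 : ℝ) 1] 1) (𝓝 (z 1)) :=
        ((hcont 1 (by norm_num)).mono Ioo_subset_Icc_self).tendsto
      have h3 : Filter.Tendsto z (𝓝[Ioo (-1 : ℝ) 1] 1) (𝓝 0) := by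
        apply Filter.Tendsto.congr' _ tendsto_const_nhds
        filter_upwards [eventually_mem_nhdsWithin] with y hy
        exact (hIoo y hy).symm
      rw [h2]
      exact tendsto_nhds_unique h2' h3
    · exact hIoo e ⟨h1, h2⟩
  exact hend
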